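/- Let 1 < p < 2, let A be a real n×d matrix, U a real n×k matrix, S a real m×n matrix, and c₁ ≥ 0, c₂ > 0 real numbers. Let V* be a real k×d matrix with ‖UV* − A‖_p^p ≤ ‖UV − A‖_p^p for all k×d matrices V. Suppose ‖S(UV* − A)‖_p^p ≤ c₁ · ‖UV* − A‖_p^p and ‖SUx‖_p^p ≥ (1/c₂) · ‖Ux‖_p^p for all x ∈ ℝᵏ. Then for every k×d matrix V, ‖SUV − SA‖_p^p ≥ 2^{2−2p}·(1/c₂)·‖UV − A‖_p^p − (c₁ + 2^{1−p}·(1/c₂))·‖UV* − A‖_p^p. -/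

import Mathlib

open Matrix

/-- The `p`-th power of the entrywise `ℓ_p` norm of a matrix: `∑ i j, |M i j| ^ p`. -/
noncomputable def lppM {n d : ℕ} (p : ℝ) (M : Matrix (Fin n) (Fin d) ℝ) : ℝ :=
  ∑ i, ∑ j, |M i j| ^ p

/-- The `p`-th power of the `ℓ_p` norm of a vector: `∑ i, |v i| ^ p`. -/
noncomputable def lppV {n : ℕ} (p : ℝ) (v : Fin n → ℝ) : ℝ :=
  ∑ i, |v i| ^ p

private lemma real_pow_add (x y : ℝ) (hx : 0 ≤ x) (hy : 0 ≤ y) {p : ℝ} (hp : 1 ≤ p) :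
    (x + y) ^ p ≤ 2 ^ (p - 1) * (x ^ p + y ^ p) := by
  have h := NNReal.rpow_add_le_mul_rpow_add_rpow ⟨x, hx⟩ ⟨y, hy⟩ hp
  have := NNReal.coe_le_coe.mpr h
  push_cast [NNReal.coe_rpow] at this
  convert this using 3 <;> rfl

private lemma key_pt {p : ℝ} (hp : 1 ≤ p) (a b : ℝ) :
    |a| ^ p ≤ 2 ^ (p - 1) * (|a + b| ^ p + |b| ^ p) := by
  have h1 : |a| ≤ |a + b| + |b| := by
    have : a = (a + b) + (-b) := by ring
    calc |a| = |(a + b) + (-b)| := by rw [← this]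
    _ ≤ |a + b| + |-b| := abs_add_le _ _
    _ = |a + b| + |b| := by rw [abs_neg]
  calc |a| ^ p ≤ (|a + b| + |b|) ^ p :=
        Real.rpow_le_rpow (abs_nonneg _) h1 (by linarith)
    _ ≤ 2 ^ (p - 1) * (|a + b| ^ p + |b| ^ p) :=
        real_pow_add _ _ (abs_nonneg _) (abs_nonneg _) hp

/-- Matrix version: `lppM (X) ≤ 2^(p-1) * (lppM (X+Y) + lppM Y)`. -/
private lemma key_mat {n d : ℕ} {p : ℝ} (hp : 1 ≤ p) (X Y : Matrix (Fin n) (Fin d) ℝ) :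
    lppM p X ≤ 2 ^ (p - 1) * (lppM p (X + Y) + lppM p Y) := by
  unfold lppM
  have hr : 2 ^ (p - 1) * ((∑ i, ∑ j, |(X + Y) i j| ^ p) + ∑ i, ∑ j, |Y i j| ^ p)
      = ∑ i, ∑ j, 2 ^ (p - 1) * (|(X + Y) i j| ^ p + |Y i j| ^ p) := by
    simp [Finset.mul_sum, mul_add, Finset.sum_add_distrib]
  rw [hr]
  refine Finset.sum_le_sum fun i _ => Finset.sum_le_sum fun j _ => ?_
  simpa using key_pt hp (X i j) (Y i j)

theorem lp_no_dilation_no_contraction_imply_general_no_contraction {n d k m : ℕ}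
    (p : ℝ) (hp1 : 1 < p) (hp2 : p < 2)
    (A : Matrix (Fin n) (Fin d) ℝ) (U : Matrix (Fin n) (Fin k) ℝ)
    (S : Matrix (Fin m) (Fin n) ℝ)
    (c₁ c₂ : ℝ) (hc₁ : 0 ≤ c₁) (hc₂ : 0 < c₂)
    (Vstar : Matrix (Fin k) (Fin d) ℝ)
    (hVstar : ∀ V : Matrix (Fin k) (Fin d) ℝ,
      lppM p (U * Vstar - A) ≤ lppM p (U * V - A))
    (hdil : lppM p (S * (U * Vstar - A)) ≤ c₁ * lppM p (U * Vstar - A))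
    (hcon : ∀ x : Fin k → ℝ,
      (1 / c₂) * lppV p (U.mulVec x) ≤ lppV p (S.mulVec (U.mulVec x))) :
    ∀ V : Matrix (Fin k) (Fin d) ℝ,
      (2 : ℝ) ^ (2 - 2 * p) * (1 / c₂) * lppM p (U * V - A) -
          (c₁ + (2 : ℝ) ^ (1 - p) * (1 / c₂)) * lppM p (U * Vstar - A) ≤
        lppM p (S * U * V - S * A) := by
  intro V
  have hp : (1 : ℝ) ≤ p := hp1.le
  set L : ℝ := lppM p (U * V - A) with hL
  set Ls : ℝ := lppM p (U * Vstar - A) with hLs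
  -- Step C: lppM p (U*(V - Vstar)) ≥ 2^(1-p) * L - Ls
  have hC : 2 ^ (1 - p) * L - Ls ≤ lppM p (U * (V - Vstar)) := by
    have h := key_mat hp (U * V - A) (-(U * Vstar - A))
    have hid : (U * V - A) + -(U * Vstar - A) = U * (V - Vstar) := by
      rw [Matrix.mul_sub]; abel
    rw [hid] at h
    have hneg : lppM p (-(U * Vstar - A)) = Ls := by
      rw [hLs]; unfold lppM
      refine Finset.sum_congr rfl fun i _ => Finset.sum_congr rfl fun j _ => ?_
      rw [Matrix.neg_apply, abs_neg]
    rw [hneg] at h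
    have h2 : (0:ℝ) < 2 ^ (1 - p) := Real.rpow_pos_of_pos two_pos _
    have hinv : (2:ℝ) ^ (1 - p) * 2 ^ (p - 1) = 1 := by
      rw [← Real.rpow_add two_pos]; norm_num
    have h3 := mul_le_mul_of_nonneg_left h h2.le
    rw [← mul_assoc, hinv, one_mul] at h3
    linarith
  -- Step B: lppM p (S*(U*(V - Vstar))) ≥ (1/c₂) * lppM p (U*(V - Vstar))
  have hB : (1 / c₂) * lppM p (U * (V - Vstar)) ≤ lppM p (S * (U * (V - Vstar))) := by
    have hcol : ∀ (M : Matrix (Fin k) (Fin d) ℝ) (j : Fin d),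
        (1 / c₂) * lppV p (fun i => (U * M) i j) ≤ lppV p (fun i => (S * (U * M)) i j) := by
      intro M j
      have := hcon (fun r => M r j)
      have e1 : U.mulVec (fun r => M r j) = fun i => (U * M) i j := by
        ext i; simp [Matrix.mulVec, Matrix.mul_apply, dotProduct]
      have e2 : S.mulVec (fun i => (U * M) i j) = fun i => (S * (U * M)) i j := by
        ext i; simp [Matrix.mulVec, Matrix.mul_apply, dotProduct, Finset.mul_sum,
          Finset.sum_mul, mul_assoc]
      rw [e1, e2] at this
      exact this
    have hsum : ∀ (N : Matrix (Fin n) (Fin d) ℝ), lppM p N = ∑ j, lppV p (fun i => N i j) := by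
      intro N; unfold lppM lppV; rw [Finset.sum_comm]
    have hsum' : ∀ (N : Matrix (Fin m) (Fin d) ℝ), lppM p N = ∑ j, lppV p (fun i => N i j) := by
      intro N; unfold lppM lppV; rw [Finset.sum_comm]
    rw [hsum, hsum', Finset.mul_sum]
    exact Finset.sum_le_sum fun j _ => hcol _ j
  -- Step A: lppM p (S*U*V - S*A) ≥ 2^(1-p) * lppM p (S*(U*(V-Vstar))) - lppM p (S*(U*Vstar - A))
  have hA : 2 ^ (1 - p) * lppM p (S * (U * (V - Vstar))) - lppM p (S * (U * Vstar - A))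
      ≤ lppM p (S * U * V - S * A) := by
    have h := key_mat hp (S * (U * (V - Vstar))) (S * (U * Vstar - A))
    have hid : S * (U * (V - Vstar)) + S * (U * Vstar - A) = S * U * V - S * A := by
      rw [Matrix.mul_sub, Matrix.mul_sub, Matrix.mul_sub, ← Matrix.mul_assoc,
        ← Matrix.mul_assoc]; abel
    rw [hid] at h
    have h2 : (0:ℝ) < 2 ^ (1 - p) := Real.rpow_pos_of_pos two_pos _
    have hinv : (2:ℝ) ^ (1 - p) * 2 ^ (p - 1) = 1 := by
      rw [← Real.rpow_add two_pos]; norm_num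
    have h3 := mul_le_mul_of_nonneg_left h h2.le
    rw [← mul_assoc, hinv, one_mul] at h3
    linarith
  -- Combine
  have h2pos : (0:ℝ) < (2:ℝ) ^ (1 - p) := Real.rpow_pos_of_pos two_pos _
  have hcomb : (2:ℝ) ^ (2 - 2*p) = (2:ℝ) ^ (1 - p) * (2:ℝ) ^ (1 - p) := by
    rw [← Real.rpow_add two_pos]; ring_nf
  have hcinv : (0:ℝ) ≤ 1 / c₂ := by positivity
  calc (2 : ℝ) ^ (2 - 2 * p) * (1 / c₂) * L - (c₁ + (2 : ℝ) ^ (1 - p) * (1 / c₂)) * Ls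
      = 2 ^ (1 - p) * ((1 / c₂) * (2 ^ (1 - p) * L - Ls)) - c₁ * Ls := by
        rw [hcomb]; ring
    _ ≤ 2 ^ (1 - p) * lppM p (S * (U * (V - Vstar))) - lppM p (S * (U * Vstar - A)) := by
        have h1 : (1 / c₂) * (2 ^ (1 - p) * L - Ls) ≤ lppM p (S * (U * (V - Vstar))) :=
          le_trans (by nlinarith [mul_le_mul_of_nonneg_left hC hcinv]) hB
        have h2 := mul_le_mul_of_nonneg_left h1 h2pos.le
        linarith [hdil]
    _ ≤ lppM p (S * U * V - S * A) := hA
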